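/- Let Q be a quiver, G a group, δ: Q₁ → G an arrow weighting, and θ: kQ ⋊ kG → kQ ⋊' kG a linear isomorphism commuting with the projections onto kQ which on basis elements has the form θ(p ⋊ g) = p ⋊' g_p·g for some elements g_p ∈ G depending only on the path p. If θ is a coalgebra map, then g_p depends only on the starting vertex of p, i.e. g_p = g_{s(p)} for all paths p. -/

import Mathlib

open TensorProduct Quiver

noncomputable section
open scoped Classical

universe u v

variable (k : Type*) [Field k]

/-- The set of all paths in a quiver, with endpoints bundled. -/
abbrev PathsIn (V : Type u) [Quiver.{v + 1} V] : Type (max u (v + 1)) := Σ a b : V, Quiver.Path a b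

/-- The underlying vector space of the path coalgebra: the free `k`-module on paths. -/
abbrev PathCoalg (V : Type u) [Quiver.{v + 1} V] : Type _ := PathsIn V →₀ k

variable {V : Type u} [Quiver.{v + 1} V]

/-- The basis vector corresponding to a path. -/
def ιp (t : PathsIn V) : PathCoalg k V := Finsupp.single t 1

/-- The linear map on the path coalgebra induced by appending the arrow `e` to
paths ending at the source of `e` (and killing all other paths). -/
def consMap {b c : V} (e : b ⟶ c) : PathCoalg k V →ₗ[k] PathCoalg k V :=
  Finsupp.lsum k fun t =>
    if h : t.2.1 = b then Finsupp.lsingle ⟨t.1, c, (h ▸ t.2.2).cons e⟩ else 0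

/-- Comultiplication on basis paths:
`Δ(p) = Σ_{p = p₂p₁} p₂ ⊗ p₁ + t(p) ⊗ p + p ⊗ s(p)`, i.e. the sum of
`(second segment) ⊗ (first segment)` over all (possibly trivial) decompositions. -/
def deltaAux : ∀ {a b : V}, Quiver.Path a b → PathCoalg k V ⊗[k] PathCoalg k V
  | a, _, .nil => ιp k ⟨a, a, .nil⟩ ⊗ₜ[k] ιp k ⟨a, a, .nil⟩
  | a, c, .cons p e =>
      ιp k ⟨c, c, .nil⟩ ⊗ₜ[k] ιp k ⟨a, c, p.cons e⟩
      + TensorProduct.map (consMap k e) LinearMap.id (deltaAux p)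

/-- The comultiplication of the path coalgebra. -/
def ΔP : PathCoalg k V →ₗ[k] PathCoalg k V ⊗[k] PathCoalg k V :=
  Finsupp.lsum k fun t => LinearMap.toSpanSingleton k _ (deltaAux k t.2.2)

/-- The counit of the path coalgebra: `ε(p) = δ_{|p|,0}`. -/
def εP : PathCoalg k V →ₗ[k] k :=
  Finsupp.lsum k fun t => if t.2.2.length = 0 then LinearMap.id else 0

variable {G : Type*} [Group G]

/-- The multiplicative extension of an arrow weighting `δ : Q₁ → G` to paths:
`δ(a_n ⋯ a_1) = δ(a_n) ⋯ δ(a_1)`, with value `1` on length-zero paths. -/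
def wt (δ : ∀ {a b : V}, (a ⟶ b) → G) : ∀ {a b : V}, Quiver.Path a b → G
  | _, _, .nil => 1
  | _, _, .cons p e => δ e * wt @δ p

/-- The underlying vector space of the smash coproduct coalgebra `kQ ⋊ kG`:
the free `k`-module on symbols `p ⋊ g`. -/
abbrev SmashCoalg (V : Type u) [Quiver.{v + 1} V] (G : Type*) : Type _ :=
  (PathsIn V × G) →₀ k

/-- The basis vector `p ⋊ g`. -/
def ιs (t : PathsIn V × G) : SmashCoalg k V G := Finsupp.single t 1

/-- Appending the arrow `e` to the path component of basis vectors `p ⋊ g`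
(for `p` ending at the source of `e`), leaving the group component unchanged. -/
def consMapS {b c : V} (e : b ⟶ c) : SmashCoalg k V G →ₗ[k] SmashCoalg k V G :=
  Finsupp.lsum k fun t =>
    if h : t.1.2.1 = b then Finsupp.lsingle (⟨t.1.1, c, (h ▸ t.1.2.2).cons e⟩, t.2) else 0

/-- The value of the smash comultiplication on the basis vector `p ⋊ g`:
`Δ(p ⋊ g) = Σ_{p = rq} (r ⋊ δ(q)g) ⊗ (q ⋊ g)`, where `q` runs over initial
segments of `p` (including the trivial decompositions). -/
def smashDeltaAux (δ : ∀ {a b : V}, (a ⟶ b) → G) (g : G) :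
    ∀ {a b : V}, Quiver.Path a b → SmashCoalg k V G ⊗[k] SmashCoalg k V G
  | a, _, .nil => ιs k (⟨a, a, .nil⟩, g) ⊗ₜ[k] ιs k (⟨a, a, .nil⟩, g)
  | a, c, .cons p e =>
      ιs k (⟨c, c, .nil⟩, wt @δ (p.cons e) * g) ⊗ₜ[k] ιs k (⟨a, c, p.cons e⟩, g)
      + TensorProduct.map (consMapS k e) LinearMap.id (smashDeltaAux @δ g p)

/-- The comultiplication of the smash coproduct coalgebra `kQ ⋊ kG`. -/
def smashDelta (δ : ∀ {a b : V}, (a ⟶ b) → G) :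
    SmashCoalg k V G →ₗ[k] SmashCoalg k V G ⊗[k] SmashCoalg k V G :=
  Finsupp.lsum k fun t => LinearMap.toSpanSingleton k _ (smashDeltaAux k @δ t.2 t.1.2.2)

/-- The counit of `kQ ⋊ kG`: `ε(p ⋊ g) = δ_{|p|,0}`. -/
def smashEps : SmashCoalg k V G →ₗ[k] k :=
  Finsupp.lsum k fun t => if t.1.2.2.length = 0 then LinearMap.id else 0

/-- The canonical projection `kQ ⋊ kG → kQ`, `p ⋊ g ↦ p`. -/
def smashProj : SmashCoalg k V G →ₗ[k] PathCoalg k V :=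
  Finsupp.lsum k fun t => Finsupp.lsingle t.1

/-- The linear embedding `kQ → kQ ⋊ kG`, `b ↦ b ⋊ g`. -/
def embG (g : G) : PathCoalg k V →ₗ[k] SmashCoalg k V G :=
  Finsupp.lsum k fun t => Finsupp.lsingle (t, g)


section Aux

variable {G : Type*} [Group G]

lemma ιs_def (t : PathsIn V × G) : ιs k t = Finsupp.single t 1 := rfl

omit [Group G] in
lemma lapply_consMapS {a b c : V} (e : b ⟶ c) (p : Quiver.Path a b) (h : G) :
    (Finsupp.lapply ((⟨a, c, p.cons e⟩ : PathsIn V), h) : SmashCoalg k V G →ₗ[k] k).comp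
      (consMapS k e) = Finsupp.lapply ((⟨a, b, p⟩ : PathsIn V), h) := by
  apply LinearMap.ext
  intro y
  induction y using Finsupp.induction_linear with
  | zero => simp
  | add f g hf hg => simp only [map_add, LinearMap.comp_apply] at hf hg ⊢; rw [hf, hg]
  | single t' d =>
    obtain ⟨⟨a', b', q⟩, g'⟩ := t'
    simp only [LinearMap.comp_apply, consMapS, Finsupp.lsum_single, Finsupp.lapply_apply]
    by_cases hb : b' = b
    · subst hb
      simp only [dite_true, dite_eq_ite, if_true, Finsupp.lsingle_apply, Finsupp.single_apply]
      split_ifs with h1 h2 h2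
      · rfl
      · exfalso; apply h2
        obtain ⟨h1, h2'⟩ := Prod.mk.injEq .. ▸ h1
        obtain ⟨rfl, h1⟩ := Sigma.mk.inj_iff.mp h1
        obtain ⟨-, h1⟩ := Sigma.mk.inj_iff.mp (eq_of_heq h1)
        have h1' := eq_of_heq h1
        have : q = p := by injection h1' 
        subst this; subst h2'; rfl
      · exfalso; apply h1
        obtain ⟨h2, h3⟩ := Prod.mk.injEq .. ▸ h2
        obtain ⟨rfl, h2⟩ := Sigma.mk.inj_iff.mp h2
        obtain ⟨-, h2⟩ := Sigma.mk.inj_iff.mp (eq_of_heq h2)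
        have := eq_of_heq h2
        subst this; subst h3; rfl
      · rfl
    · rw [dif_neg hb]
      simp only [LinearMap.zero_apply, Finsupp.coe_zero, Pi.zero_apply, Finsupp.single_apply]
      rw [if_neg (by
        rintro h1
        obtain ⟨h1, -⟩ := Prod.mk.injEq .. ▸ h1
        obtain ⟨rfl, h1⟩ := Sigma.mk.inj_iff.mp h1
        obtain ⟨rfl, -⟩ := Sigma.mk.inj_iff.mp (eq_of_heq h1)
        exact hb rfl)]

lemma F_deltaAux (δ : ∀ {a b : V}, (a ⟶ b) → G) (g h : G) {a b : V} (p : Quiver.Path a b) :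
    (TensorProduct.lid k (SmashCoalg k V G))
      ((LinearMap.rTensor (SmashCoalg k V G)
        (Finsupp.lapply ((⟨a, b, p⟩ : PathsIn V), h) : SmashCoalg k V G →ₗ[k] k))
        (smashDeltaAux k @δ g p))
      = if h = g then ιs k ((⟨a, a, Quiver.Path.nil⟩ : PathsIn V), g) else 0 := by
  induction p with
  | nil =>
    simp only [smashDeltaAux, LinearMap.rTensor_tmul, TensorProduct.lid_tmul,
      Finsupp.lapply_apply, ιs_def, Finsupp.single_apply]
    by_cases hg : h = g
    · subst hg; simp
    · rw [if_neg (by rintro h1; obtain ⟨-, h2⟩ := Prod.mk.injEq .. ▸ h1; exact hg h2.symm),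
        if_neg hg, zero_smul]
  | cons p e ih =>
    rename_i c
    simp only [smashDeltaAux, map_add]
    have h1 : (Finsupp.lapply ((⟨a, c, p.cons e⟩ : PathsIn V), h) :
        SmashCoalg k V G →ₗ[k] k) (ιs k ((⟨c, c, Quiver.Path.nil⟩ : PathsIn V),
          wt @δ (p.cons e) * g)) = 0 := by
      simp only [ιs_def, Finsupp.lapply_apply, Finsupp.single_apply]
      rw [if_neg]
      rintro h1
      obtain ⟨h1, -⟩ := Prod.mk.injEq .. ▸ h1
      have := congrArg (fun t : PathsIn V => t.2.2.length) h1
      simp [Quiver.Path.length] at this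
    have h2 : (LinearMap.rTensor (SmashCoalg k V G)
        (Finsupp.lapply ((⟨a, c, p.cons e⟩ : PathsIn V), h) : SmashCoalg k V G →ₗ[k] k))
        (TensorProduct.map (consMapS k e) LinearMap.id (smashDeltaAux k @δ g p))
        = (LinearMap.rTensor (SmashCoalg k V G)
            (Finsupp.lapply ((⟨a, _, p⟩ : PathsIn V), h) : SmashCoalg k V G →ₗ[k] k))
            (smashDeltaAux k @δ g p) := by
      rw [← LinearMap.comp_apply, LinearMap.rTensor, ← TensorProduct.map_comp,
        lapply_consMapS, LinearMap.comp_id]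
      rfl
    rw [LinearMap.rTensor_tmul, h1, TensorProduct.zero_tmul, map_zero, zero_add, h2, ih]

lemma smashDelta_single (δ : ∀ {a b : V}, (a ⟶ b) → G) (t : PathsIn V) (g : G) :
    smashDelta k @δ (ιs k (t, g)) = smashDeltaAux k @δ g t.2.2 := by
  simp [smashDelta, ιs_def, Finsupp.lsum_single, LinearMap.toSpanSingleton_apply]

end Aux

/-- Suppose `θ : kQ ⋊ kG → kQ ⋊' kG` is a linear isomorphism
of the form `θ(p ⋊ g) = p ⋊' g_p·g` (so it commutes with the projections onto
`kQ`). If `θ` is a coalgebra map, then `g_p` depends only on the starting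
vertex of `p`: `g_p = g_{s(p)}` for all paths `p`. -/
theorem smash_iso_constants_depend_on_source
    (δ δ' : ∀ {a b : V}, (a ⟶ b) → G) (gp : PathsIn V → G)
    (θ : SmashCoalg k V G →ₗ[k] SmashCoalg k V G)
    (hθ : ∀ t : PathsIn V × G, θ (ιs k t) = ιs k (t.1, gp t.1 * t.2))
    (hbij : Function.Bijective θ)
    (hproj : ∀ x, smashProj k (θ x) = smashProj k x)
    (hcoalg : ∀ x, smashDelta k @δ' (θ x) = TensorProduct.map θ θ (smashDelta k @δ x))
    (hcounit : ∀ x, smashEps k (θ x) = smashEps k x) :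
    ∀ t : PathsIn V, gp t = gp ⟨t.1, t.1, Quiver.Path.nil⟩ := by
  intro t
  obtain ⟨a, b, p⟩ := t
  have h1 := hcoalg (ιs k ((⟨a, b, p⟩ : PathsIn V), 1))
  rw [hθ, smashDelta_single, smashDelta_single] at h1
  have key : (TensorProduct.lid k (SmashCoalg k V G)).toLinearMap ∘ₗ
        LinearMap.rTensor (SmashCoalg k V G)
          (Finsupp.lapply ((⟨a, b, p⟩ : PathsIn V), gp ⟨a, b, p⟩ * 1) :
            SmashCoalg k V G →ₗ[k] k) ∘ₗ TensorProduct.map θ θ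
      = θ ∘ₗ (TensorProduct.lid k (SmashCoalg k V G)).toLinearMap ∘ₗ
        LinearMap.rTensor (SmashCoalg k V G)
          (Finsupp.lapply ((⟨a, b, p⟩ : PathsIn V), (1 : G)) :
            SmashCoalg k V G →ₗ[k] k) := by
    have hlap : ∀ y : SmashCoalg k V G,
        (Finsupp.lapply ((⟨a, b, p⟩ : PathsIn V), gp ⟨a, b, p⟩ * 1) :
          SmashCoalg k V G →ₗ[k] k) (θ y)
        = (Finsupp.lapply ((⟨a, b, p⟩ : PathsIn V), (1 : G)) :
          SmashCoalg k V G →ₗ[k] k) y := by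
      intro y
      induction y using Finsupp.induction_linear with
      | zero => simp
      | add f g hf hg => simp only [map_add]; rw [hf, hg]
      | single t' d =>
        obtain ⟨t1, t2⟩ := t'
        rw [show (Finsupp.single (t1, t2) d : SmashCoalg k V G) = d • ιs k (t1, t2) by
          simp [ιs_def, Finsupp.smul_single], map_smul, map_smul, map_smul, hθ]
        congr 1
        simp only [ιs_def, Finsupp.lapply_apply, Finsupp.single_apply]
        split_ifs with h2 h3 h3
        · rfl
        · exfalso; apply h3
          obtain ⟨h2, h3'⟩ := Prod.mk.injEq .. ▸ h2
          subst h2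
          have : t2 = 1 := mul_left_cancel h3'
          subst this; rfl
        · exfalso; apply h2
          obtain ⟨h3, h4⟩ := Prod.mk.injEq .. ▸ h3
          subst h3; subst h4; rfl
        · rfl
    apply TensorProduct.ext'
    intro u v
    simp only [LinearMap.comp_apply, TensorProduct.map_tmul, LinearMap.rTensor_tmul,
      LinearEquiv.coe_coe, TensorProduct.lid_tmul, map_smul, hlap]
  have h2 : (TensorProduct.lid k (SmashCoalg k V G))
      ((LinearMap.rTensor (SmashCoalg k V G)
        (Finsupp.lapply ((⟨a, b, p⟩ : PathsIn V), gp ⟨a, b, p⟩ * 1) :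
          SmashCoalg k V G →ₗ[k] k))
        (smashDeltaAux k @δ' (gp (⟨a, b, p⟩ : PathsIn V) * 1) p))
      = (TensorProduct.lid k (SmashCoalg k V G))
      ((LinearMap.rTensor (SmashCoalg k V G)
        (Finsupp.lapply ((⟨a, b, p⟩ : PathsIn V), gp ⟨a, b, p⟩ * 1) :
          SmashCoalg k V G →ₗ[k] k))
        (TensorProduct.map θ θ (smashDeltaAux k @δ (1 : G) p))) := by
    rw [h1]
  rw [F_deltaAux, if_pos rfl] at h2
  have hk := LinearMap.congr_fun key (smashDeltaAux k @δ (1 : G) p)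
  simp only [LinearMap.comp_apply, LinearEquiv.coe_coe] at hk
  rw [F_deltaAux, if_pos rfl, hθ] at hk
  rw [hk] at h2
  rw [ιs_def, ιs_def] at h2
  have h4 := Finsupp.single_left_injective (α := PathsIn V × G) (one_ne_zero (α := k)) h2
  obtain ⟨-, h5⟩ := Prod.mk.injEq .. ▸ h4
  rw [mul_one, mul_one] at h5
  exact h5
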